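/- Let κ be a regular uncountable cardinal, I an ideal on ℕ, and m a fast sequence. If ℬ₁ ⋖ ℬ₂ ⋖ ℬ₃ are complete Boolean algebras and both pairs (ℬ₁,ℬ₂) and (ℬ₂,ℬ₃) have the (κ,I,m)-pattern transfer property, then the pair (ℬ₁,ℬ₃) has the (κ,I,m)-pattern transfer property. -/

import Mathlib

universe u v

/-- `mCirc m i = ∏_{j<i} m j` (so `mCirc m 0 = 1`). -/
def mCirc (m : ℕ → ℕ) (i : ℕ) : ℕ := ∏ j ∈ Finset.range i, m j

/-- A *fast sequence* is `m : ℕ → ℕ` with `m 0 ≥ 2` and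
`m i ≥ ((m°(i))^(i^i))^(4·(m°(i))^(i^i))` for all `i`. -/
def FastSeq (m : ℕ → ℕ) : Prop :=
  2 ≤ m 0 ∧ ∀ i, (mCirc m i ^ i ^ i) ^ (4 * mCirc m i ^ i ^ i) ≤ m i

/-- An ideal on `ℕ`: contains all finite sets, closed under subsets and finite
unions. -/
def IsIdealOnNat (I : Set (Set ℕ)) : Prop :=
  (∀ v : Set ℕ, v.Finite → v ∈ I) ∧ (∀ v ∈ I, ∀ w ⊆ v, w ∈ I) ∧
    (∀ v ∈ I, ∀ w ∈ I, v ∪ w ∈ I)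

/-- A subset `S` of a complete Boolean algebra `B` is a complete subalgebra if it
contains `⊥` and is closed under complements, binary meets, and arbitrary suprema
(the latter computed in `B`; this is the meaning of `S ⋖ B`). -/
def IsCompleteSubalgebra {B : Type v} [CompleteBooleanAlgebra B] (S : Set B) : Prop :=
  ⊥ ∈ S ∧ (∀ a ∈ S, aᶜ ∈ S) ∧ (∀ a ∈ S, ∀ b ∈ S, a ⊓ b ∈ S) ∧
    ∀ T ⊆ S, sSup T ∈ S

/-- The `κ`-c.c. for the (sub)algebra `S` of `B`: every antichain of nonzero
elements of `S` has cardinality `< κ`.  (Elements of `Set B` live in universe `v`,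
so the cardinality is compared after lifting.) -/
def KappaCCOn (κ : Cardinal.{u}) {B : Type v} [CompleteBooleanAlgebra B]
    (S : Set B) : Prop :=
  ∀ A : Set B, A ⊆ S → (∀ a ∈ A, a ≠ ⊥) →
    (A.Pairwise fun a b => a ⊓ b = ⊥) →
    Cardinal.lift.{u} (Cardinal.mk ↥A) < Cardinal.lift.{v} κ

/-- The `(κ, I, m)`-chain condition for the (sub)algebra `S` of the complete
Boolean algebra `B`.  The index set of ordinals below `κ` is represented by the
type `κ.ord.ToType`. -/
def CCCOn (κ : Cardinal.{u}) (I : Set (Set ℕ)) (m : ℕ → ℕ)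
    {B : Type v} [CompleteBooleanAlgebra B] (S : Set B) : Prop :=
  ∀ U₂ : Set κ.ord.ToType, Cardinal.mk ↥U₂ = κ →
    ∀ a : κ.ord.ToType → B, (∀ α ∈ U₂, a α ∈ S ∧ a α ≠ ⊥) →
      ∃ j : ℕ, ∃ U₁ ⊆ U₂, Cardinal.mk ↥U₁ = κ ∧ ∃ A ∈ I,
        ∀ n : ℕ, n ∉ A → ∀ u : Finset κ.ord.ToType, ↑u ⊆ U₁ →
          ∀ i : ℕ, i + j < n →
            m n < u.card * mCirc m n ^ n ^ i → u.card ≤ m n →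
            ∃ v ⊆ u, u.card ≤ v.card * mCirc m n ^ n ^ (i + j) ∧
              v.inf a ≠ ⊥

/-- `a` is below the projection of `b` (relative to the subalgebra `S₁`):
every nonzero `c ∈ S₁` with `c ≤ a` satisfies `c ⊓ b ≠ ⊥`. -/
def BelowProj {B : Type v} [CompleteBooleanAlgebra B] (S₁ : Set B) (a b : B) :
    Prop :=
  ∀ c ∈ S₁, c ≠ ⊥ → c ≤ a → c ⊓ b ≠ ⊥

/-- The pair `(S₁, S₂)` of subalgebras of `B` has the `(κ, I, m)`-pattern
transfer property. -/
def PatternTransfer (κ : Cardinal.{u}) (I : Set (Set ℕ)) (m : ℕ → ℕ)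
    {B : Type v} [CompleteBooleanAlgebra B] (S₁ S₂ : Set B) : Prop :=
  IsCompleteSubalgebra S₁ ∧ IsCompleteSubalgebra S₂ ∧ S₁ ⊆ S₂ ∧
  KappaCCOn κ S₁ ∧
  ∀ U₂ : Set κ.ord.ToType, Cardinal.mk ↥U₂ = κ →
    ∀ a2 : κ.ord.ToType → B, (∀ α ∈ U₂, a2 α ∈ S₂ ∧ a2 α ≠ ⊥) →
      (∀ α ∈ U₂, ∀ β ∈ U₂, a2 α = a2 β → α = β) →
      ∃ j : ℕ, ∃ U₁ ⊆ U₂, Cardinal.mk ↥U₁ = κ ∧ ∃ A ∈ I,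
        ∃ a1 : κ.ord.ToType → B,
          (∀ α ∈ U₁, a1 α ∈ S₁ ∧ a1 α ≠ ⊥ ∧ BelowProj S₁ (a1 α) (a2 α)) ∧
          ∀ n : ℕ, n ∉ A → ∀ i : ℕ, i + j < n →
            ∀ u : Finset κ.ord.ToType, ↑u ⊆ U₁ →
              m n < u.card * mCirc m n ^ n ^ i → u.card < m n →
              ∀ a ∈ S₁, a ≠ ⊥ → a ≤ u.inf a1 →
                ∃ v ⊆ u, u.card ≤ v.card * mCirc m n ^ n ^ (i + j) ∧
                  v.inf a2 ⊓ a ≠ ⊥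

section AuxLemmas

lemma fastSeq_one_le {m : ℕ → ℕ} (hm : FastSeq m) : ∀ k, 1 ≤ m k := by
  intro k
  induction k using Nat.strong_induction_on with
  | _ k ih =>
    have hc : 1 ≤ mCirc m k :=
      Finset.one_le_prod' fun j hj => ih j (Finset.mem_range.mp hj)
    calc 1 ≤ (mCirc m k ^ k ^ k) ^ (4 * mCirc m k ^ k ^ k) :=
          Nat.one_le_pow _ _ (Nat.pow_pos hc)
      _ ≤ m k := hm.2 k

lemma one_le_mCirc {m : ℕ → ℕ} (hm : FastSeq m) (n : ℕ) : 1 ≤ mCirc m n :=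
  Finset.one_le_prod' fun j _ => fastSeq_one_le hm j

lemma pow_pow_le {C n a b : ℕ} (hC : 1 ≤ C) (hn : 2 ≤ n) (hab : a ≤ b) :
    C ^ n ^ a * C ^ n ^ b ≤ C ^ n ^ (b + 1) := by
  rw [← pow_add]
  apply Nat.pow_le_pow_right hC
  have h1 : n ^ a ≤ n ^ b := Nat.pow_le_pow_right (by omega) hab
  calc n ^ a + n ^ b ≤ 2 * n ^ b := by omega
    _ ≤ n * n ^ b := Nat.mul_le_mul_right _ hn
    _ = n ^ (b + 1) := by ring

variable {B : Type v} [CompleteBooleanAlgebra B]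

lemma IsCompleteSubalgebra.top_mem {S : Set B} (h : IsCompleteSubalgebra S) :
    ⊤ ∈ S := by
  have := h.2.1 ⊥ h.1
  simpa using this

lemma IsCompleteSubalgebra.finsetInf_mem {S : Set B} (h : IsCompleteSubalgebra S)
    {ι : Type*} (u : Finset ι) (f : ι → B) (hf : ∀ x ∈ u, f x ∈ S) :
    u.inf f ∈ S := by
  classical
  induction u using Finset.induction_on with
  | empty => simpa using h.top_mem
  | insert _ _ hx ih =>
      rw [Finset.inf_insert]
      exact h.2.2.1 _ (hf _ (Finset.mem_insert_self _ _)) _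
        (ih fun y hy => hf y (Finset.mem_insert_of_mem hy))

lemma IsCompleteSubalgebra.sInf_mem {S : Set B} (h : IsCompleteSubalgebra S)
    (T : Set B) (hT : T ⊆ S) : sInf T ∈ S := by
  have h1 : sSup (compl '' T) ∈ S := h.2.2.2 _ (by
    rintro _ ⟨t, ht, rfl⟩; exact h.2.1 t (hT ht))
  have h2 : (sSup (compl '' T))ᶜ ∈ S := h.2.1 _ h1
  have h3 : sInf T = (sSup (compl '' T))ᶜ := by
    rw [sSup_image, ← compl_sInf, compl_compl]
  rw [h3]; exact h2

lemma exists_belowProj {S : Set B} (h : IsCompleteSubalgebra S) {b : B}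
    (hb : b ≠ ⊥) : ∃ p, p ∈ S ∧ p ≠ ⊥ ∧ BelowProj S p b := by
  refine ⟨sInf {c | c ∈ S ∧ b ≤ c}, h.sInf_mem _ (fun c hc => hc.1), ?_, ?_⟩
  · intro hp
    have hle : b ≤ sInf {c | c ∈ S ∧ b ≤ c} := le_sInf fun c hc => hc.2
    rw [hp, le_bot_iff] at hle
    exact hb hle
  · intro c hc hne hle heq
    have hdb : b ≤ cᶜ := le_compl_iff_disjoint_left.mpr (disjoint_iff.mpr heq)
    have hmem : cᶜ ∈ {c' | c' ∈ S ∧ b ≤ c'} := ⟨h.2.1 c hc, hdb⟩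
    have : c ≤ cᶜ := hle.trans (sInf_le hmem)
    have hcb : c ≤ ⊥ := by
      calc c ≤ c ⊓ cᶜ := le_inf le_rfl this
        _ = ⊥ := by simp
    exact hne (le_bot_iff.mp hcb)

lemma belowProj_trans {S₁ S₂ : Set B} (h2 : IsCompleteSubalgebra S₂)
    (h12 : S₁ ⊆ S₂) {p q t : B} (hq : q ∈ S₂) (hpq : BelowProj S₁ p q)
    (hqt : BelowProj S₂ q t) : BelowProj S₁ p t := by
  intro c hc hne hle hct
  have hd : c ⊓ q ≠ ⊥ := hpq c hc hne hle
  apply hqt (c ⊓ q) (h2.2.2.1 c (h12 hc) q hq) hd inf_le_right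
  have hle2 : (c ⊓ q) ⊓ t ≤ c ⊓ t := inf_le_inf_right _ inf_le_left
  rw [hct] at hle2
  exact le_bot_iff.mp hle2

end AuxLemmas

/-- (Observation 7.12: transitivity of pattern transfer.)  If `ℬ₁ ⋖ ℬ₂ ⋖ ℬ₃`
are complete Boolean algebras (represented as complete subalgebras
`S₁ ⊆ S₂ ⊆ S₃` of a complete Boolean algebra `B`) and both pairs `(S₁,S₂)` and
`(S₂,S₃)` have the `(κ,I,m)`-pattern transfer property, then so does the pair
`(S₁,S₃)`. -/
theorem patternTransfer_trans (κ : Cardinal.{u})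
    (hreg : κ.IsRegular) (hunc : Cardinal.aleph0 < κ)
    (I : Set (Set ℕ)) (hI : IsIdealOnNat I) (m : ℕ → ℕ) (hm : FastSeq m)
    {B : Type v} [CompleteBooleanAlgebra B] (S₁ S₂ S₃ : Set B)
    (h12 : PatternTransfer κ I m S₁ S₂) (h23 : PatternTransfer κ I m S₂ S₃) :
    PatternTransfer κ I m S₁ S₃ := by
  classical
  obtain ⟨hS1, hS2, h12sub, hcc, H12⟩ := h12
  obtain ⟨_, hS3, h23sub, _, H23⟩ := h23
  refine ⟨hS1, hS3, h12sub.trans h23sub, hcc, ?_⟩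
  intro U₂ hU₂ a3 ha3 hinj3
  obtain ⟨j₂, U', hU'sub, hU'card, A₂, hA₂, a2, ha2, H2⟩ := H23 U₂ hU₂ a3 ha3 hinj3
  by_cases hA : ∃ b : B, Cardinal.mk ↥{α : κ.ord.ToType | α ∈ U' ∧ a2 α = b} = κ
  · -- Case A : some fiber of a2 has full size κ
    obtain ⟨b, hbcard⟩ := hA
    have hFne : {α : κ.ord.ToType | α ∈ U' ∧ a2 α = b}.Nonempty := by
      rw [← Set.nonempty_coe_sort, ← Cardinal.mk_ne_zero_iff, hbcard]
      exact (Cardinal.aleph0_pos.trans_le hreg.aleph0_le).ne'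
    obtain ⟨α₀, hα₀U, hα₀b⟩ := hFne
    have hbS : b ∈ S₂ := hα₀b ▸ (ha2 α₀ hα₀U).1
    have hbne : b ≠ ⊥ := hα₀b ▸ (ha2 α₀ hα₀U).2.1
    obtain ⟨p, hpS, hpne, hpproj⟩ := exists_belowProj hS1 hbne
    refine ⟨j₂, {α : κ.ord.ToType | α ∈ U' ∧ a2 α = b},
      fun α hα => hU'sub hα.1, hbcard, A₂, hA₂, (fun _ => p), ?_, ?_⟩
    · intro α hα
      refine ⟨hpS, hpne, belowProj_trans hS2 h12sub hbS hpproj ?_⟩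
      exact hα.2 ▸ (ha2 α hα.1).2.2
    · intro n hn i hij u hu hmlt hcard a haS hane hale
      have hune : u.Nonempty := by
        rcases Finset.eq_empty_or_nonempty u with h | h
        · subst h; simp at hmlt
        · exact h
      obtain ⟨x, hx⟩ := hune
      have halep : a ≤ p := hale.trans (Finset.inf_le hx)
      have hab : a ⊓ b ≠ ⊥ := hpproj a haS hane halep
      have habS : a ⊓ b ∈ S₂ := hS2.2.2.1 a (h12sub haS) b hbS
      have hle2 : a ⊓ b ≤ u.inf a2 := by
        refine Finset.le_inf fun y hy => ?_
        rw [(hu hy).2]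
        exact inf_le_right
      obtain ⟨v, hvu, hvcard, hvne⟩ :=
        H2 n hn i hij u (fun y hy => (hu hy).1) hmlt hcard (a ⊓ b) habS hab hle2
      refine ⟨v, hvu, hvcard, ?_⟩
      intro h0
      apply hvne
      have hle3 : v.inf a3 ⊓ (a ⊓ b) ≤ v.inf a3 ⊓ a := inf_le_inf_left _ inf_le_left
      rw [h0] at hle3
      exact le_bot_iff.mp hle3
  · -- Case B : all fibers of a2 are small; pick a transversal
    push_neg at hA
    obtain ⟨r, hrU, hreq⟩ : ∃ r : κ.ord.ToType → κ.ord.ToType,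
        (∀ α ∈ U', r α ∈ U' ∧ a2 (r α) = a2 α) ∧
        (∀ α ∈ U', ∀ β ∈ U', a2 α = a2 β → r α = r β) := by
      refine ⟨fun α => if h : ∃ γ, γ ∈ U' ∧ a2 γ = a2 α then h.choose else α, ?_, ?_⟩
      · intro α hα
        have h : ∃ γ, γ ∈ U' ∧ a2 γ = a2 α := ⟨α, hα, rfl⟩
        simp only [dif_pos h]
        exact h.choose_spec
      · intro α hα β hβ hab
        have h2 : ∃ γ, γ ∈ U' ∧ a2 γ = a2 β := ⟨β, hβ, rfl⟩
        have h1 : ∃ γ, γ ∈ U' ∧ a2 γ = a2 α := ⟨α, hα, rfl⟩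
        simp only [dif_pos h1, dif_pos h2]
        exact (show ∀ x y : B, x = y → ∀ (h1 : ∃ γ, γ ∈ U' ∧ a2 γ = x)
          (h2 : ∃ γ, γ ∈ U' ∧ a2 γ = y), h1.choose = h2.choose by
            rintro x _ rfl _ _; rfl) _ _ hab h1 h2
    have hU''sub : r '' U' ⊆ U' := by
      rintro _ ⟨α, hα, rfl⟩; exact (hrU α hα).1
    have hU''card : Cardinal.mk ↥(r '' U') = κ := by
      refine le_antisymm ((Cardinal.mk_le_mk_of_subset hU''sub).trans_eq hU'card) ?_
      by_contra hlt
      rw [not_le] at hlt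
      have hcover : U' ⊆ ⋃ (β : ↥(r '' U')),
          {α : κ.ord.ToType | α ∈ U' ∧ a2 α = a2 (β : κ.ord.ToType)} := by
        intro α hα
        exact Set.mem_iUnion.mpr
          ⟨⟨r α, Set.mem_image_of_mem r hα⟩, hα, ((hrU α hα).2).symm⟩
      have hlt2 : Cardinal.mk ↥U' < κ := by
        refine lt_of_le_of_lt (Cardinal.mk_le_mk_of_subset hcover) ?_
        refine (Cardinal.card_iUnion_lt_iff_forall_of_isRegular hreg hlt).mpr ?_
        intro β
        refine lt_of_le_of_ne ?_ (hA (a2 (β : κ.ord.ToType)))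
        exact (Cardinal.mk_le_mk_of_subset (fun α hα => hα.1)).trans_eq hU'card
      exact absurd hU'card hlt2.ne
    have ha2'' : ∀ α ∈ r '' U', a2 α ∈ S₂ ∧ a2 α ≠ ⊥ := fun α hα =>
      ⟨(ha2 α (hU''sub hα)).1, (ha2 α (hU''sub hα)).2.1⟩
    have hinj'' : ∀ α ∈ r '' U', ∀ β ∈ r '' U', a2 α = a2 β → α = β := by
      rintro _ ⟨α, hα, rfl⟩ _ ⟨β, hβ, rfl⟩ hab
      have hab' : a2 α = a2 β := by
        rw [← (hrU α hα).2, ← (hrU β hβ).2, hab]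
      exact hreq α hα β hβ hab'
    obtain ⟨j₁, U₁, hU₁sub, hU₁card, A₁, hA₁, a1, ha1, H1⟩ :=
      H12 (r '' U') hU''card a2 ha2'' hinj''
    have hU₁U' : U₁ ⊆ U' := hU₁sub.trans hU''sub
    refine ⟨j₁ + j₂ + 2, U₁, hU₁U'.trans hU'sub, hU₁card, A₁ ∪ A₂,
      hI.2.2 _ hA₁ _ hA₂, a1, ?_, ?_⟩
    · intro α hα
      obtain ⟨hm1, hm2, hm3⟩ := ha1 α hα
      exact ⟨hm1, hm2, belowProj_trans hS2 h12sub (ha2 α (hU₁U' hα)).1 hm3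
        (ha2 α (hU₁U' hα)).2.2⟩
    · intro n hn i hij u hu hmlt hcard a haS hane hale
      have hn1 : n ∉ A₁ := fun h => hn (Set.mem_union_left _ h)
      have hn2 : n ∉ A₂ := fun h => hn (Set.mem_union_right _ h)
      have hCpos : 1 ≤ mCirc m n := one_le_mCirc hm n
      have hn2' : 2 ≤ n := by omega
      obtain ⟨v, hvu, hvcard, hvne⟩ :=
        H1 n hn1 i (by omega) u hu hmlt hcard a haS hane hale
      have hvU' : ↑v ⊆ U' := fun x hx => hU₁U' (hu (hvu hx))
      have hbS : v.inf a2 ⊓ a ∈ S₂ := by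
        refine hS2.2.2.1 _ ?_ a (h12sub haS)
        exact hS2.finsetInf_mem v a2 fun x hx => (ha2 x (hvU' hx)).1
      have hmlt2 : m n < v.card * mCirc m n ^ n ^ (i + j₁ + 1) := by
        calc m n < u.card * mCirc m n ^ n ^ i := hmlt
          _ ≤ (v.card * mCirc m n ^ n ^ (i + j₁)) * mCirc m n ^ n ^ i :=
              Nat.mul_le_mul_right _ hvcard
          _ = v.card * (mCirc m n ^ n ^ i * mCirc m n ^ n ^ (i + j₁)) := by ring
          _ ≤ v.card * mCirc m n ^ n ^ (i + j₁ + 1) :=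
              Nat.mul_le_mul_left _ (pow_pow_le hCpos hn2' (by omega))
      have hvcard2 : v.card < m n := lt_of_le_of_lt (Finset.card_le_card hvu) hcard
      obtain ⟨w, hwv, hwcard, hwne⟩ :=
        H2 n hn2 (i + j₁ + 1) (by omega) v hvU' hmlt2 hvcard2
          (v.inf a2 ⊓ a) hbS hvne inf_le_left
      refine ⟨w, hwv.trans hvu, ?_, ?_⟩
      · calc u.card ≤ v.card * mCirc m n ^ n ^ (i + j₁) := hvcard
          _ ≤ (w.card * mCirc m n ^ n ^ (i + j₁ + 1 + j₂)) * mCirc m n ^ n ^ (i + j₁) :=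
              Nat.mul_le_mul_right _ hwcard
          _ = w.card * (mCirc m n ^ n ^ (i + j₁) * mCirc m n ^ n ^ (i + j₁ + 1 + j₂)) := by
              ring
          _ ≤ w.card * mCirc m n ^ n ^ (i + (j₁ + j₂ + 2)) := by
              have hkey := pow_pow_le hCpos hn2'
                (show i + j₁ ≤ i + j₁ + 1 + j₂ by omega)
              have heq : i + j₁ + 1 + j₂ + 1 = i + (j₁ + j₂ + 2) := by omega
              exact Nat.mul_le_mul_left _ (heq ▸ hkey)
      · intro h0
        apply hwne
        have hle3 : w.inf a3 ⊓ (v.inf a2 ⊓ a) ≤ w.inf a3 ⊓ a :=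
          inf_le_inf_left _ inf_le_right
        rw [h0] at hle3
        exact le_bot_iff.mp hle3
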